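/- Let P be an orthogonal projection of rank 2 on ℂ² ⊗ ℂ² such that P = A ⊗ B for some 2×2 complex matrices A and B. Then there exists a unit vector φ ∈ ℂ² with P = |φ⟩⟨φ| ⊗ I, or there exists a unit vector ψ ∈ ℂ² with P = I ⊗ |ψ⟩⟨ψ|. -/

import Mathlib

open Kronecker Matrix

/-- The rank-one operator `|v⟩⟨v|`. -/
def outer (v : Fin 2 → ℂ) : Matrix (Fin 2) (Fin 2) ℂ := Matrix.vecMulVec v (star v)

private lemma kron_entry (A B : Matrix (Fin 2) (Fin 2) ℂ) (i j k l) :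
    (A ⊗ₖ B) (i, j) (k, l) = A i k * B j l := rfl

/-- If `A ⊗ B = C ⊗ D` with `A, B ≠ 0`, the factors agree up to a scalar. -/
private lemma kron_factor (A B C D : Matrix (Fin 2) (Fin 2) ℂ) (hA : A ≠ 0) (hB : B ≠ 0)
    (h : A ⊗ₖ B = C ⊗ₖ D) : ∃ μ : ℂ, μ ≠ 0 ∧ C = μ • A ∧ B = μ • D := by
  have he : ∀ i k j l, A i k * B j l = C i k * D j l := by
    intro i k j l
    have := congrFun (congrFun h (i, j)) (k, l)
    simpa [kron_entry] using this
  obtain ⟨j0, l0, hb⟩ : ∃ j l, B j l ≠ 0 := by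
    by_contra hc
    push_neg at hc
    exact hB (by ext j l; simpa using hc j l)
  obtain ⟨i0, k0, ha⟩ : ∃ i k, A i k ≠ 0 := by
    by_contra hc
    push_neg at hc
    exact hA (by ext i k; simpa using hc i k)
  have hD : D j0 l0 ≠ 0 := by
    intro hd
    apply ha
    have := he i0 k0 j0 l0
    rw [hd, mul_zero] at this
    exact (mul_eq_zero.mp this).resolve_right hb
  refine ⟨B j0 l0 / D j0 l0, div_ne_zero hb hD, ?_, ?_⟩
  · ext i k
    have h1 := he i k j0 l0
    simp only [Matrix.smul_apply, smul_eq_mul]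
    rw [div_mul_eq_mul_div, eq_div_iff hD]
    linear_combination -h1
  · ext j l
    have h1 := he i0 k0 j l
    have h2 := he i0 k0 j0 l0
    have key : A i0 k0 * (B j l * D j0 l0) = A i0 k0 * (B j0 l0 * D j l) := by
      calc A i0 k0 * (B j l * D j0 l0) = (A i0 k0 * B j l) * D j0 l0 := by ring
        _ = (C i0 k0 * D j l) * D j0 l0 := by rw [h1]
        _ = (C i0 k0 * D j0 l0) * D j l := by ring
        _ = (A i0 k0 * B j0 l0) * D j l := by rw [← h2]
        _ = A i0 k0 * (B j0 l0 * D j l) := by ring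
    have key2 := mul_left_cancel₀ ha key
    simp only [Matrix.smul_apply, smul_eq_mul]
    rw [div_mul_eq_mul_div, eq_div_iff hD]
    linear_combination key2

/-- Classification of 2×2 Hermitian idempotents. -/
private lemma herm_idem_classify (E : Matrix (Fin 2) (Fin 2) ℂ) (hH : Eᴴ = E)
    (hI : E * E = E) :
    E = 0 ∨ E = 1 ∨ ∃ v : Fin 2 → ℂ, dotProduct (star v) v = 1 ∧ E = outer v := by
  have ha' : E 0 0 = E 0 0 := rfl
  set a := E 0 0 with ha'
  set b := E 0 1 with hb'
  set c := E 1 0 with hc'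
  set d := E 1 1 with hd'
  have hca : (starRingEnd ℂ) a = a := by
    have := congrFun (congrFun hH 0) 0; simpa [conjTranspose_apply] using this
  have hcb : c = (starRingEnd ℂ) b := by
    have := congrFun (congrFun hH 1) 0
    simpa [conjTranspose_apply] using this.symm
  have e00 : a * a + b * c = a := by
    have := congrFun (congrFun hI 0) 0
    simpa [mul_apply, Fin.sum_univ_two] using this
  have e01 : a * b + b * d = b := by
    have := congrFun (congrFun hI 0) 1
    simpa [mul_apply, Fin.sum_univ_two] using this
  have e11 : c * b + d * d = d := by
    have := congrFun (congrFun hI 1) 1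
    simpa [mul_apply, Fin.sum_univ_two] using this
  have hEmat : E = !![a, b; c, d] := by
    ext i j
    fin_cases i <;> fin_cases j <;>
      simp [ha', hb', hc', hd']
  by_cases hb : b = 0
  · have hc0 : c = 0 := by rw [hcb, hb, map_zero]
    have haa : a * a = a := by linear_combination e00 - c * hb
    have hdd : d * d = d := by linear_combination e11 - c * hb
    have ha01 : a = 0 ∨ a = 1 := by
      rcases mul_eq_zero.mp (show a * (a - 1) = 0 by linear_combination haa) with h | h
      · exact Or.inl h
      · exact Or.inr (sub_eq_zero.mp h)
    have hd01 : d = 0 ∨ d = 1 := by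
      rcases mul_eq_zero.mp (show d * (d - 1) = 0 by linear_combination hdd) with h | h
      · exact Or.inl h
      · exact Or.inr (sub_eq_zero.mp h)
    rcases ha01 with ha0 | ha1 <;> rcases hd01 with hd0 | hd1
    · left
      rw [hEmat, ha0, hd0, hb, hc0]
      ext i j; fin_cases i <;> fin_cases j <;> simp
    · right; right
      refine ⟨![0, 1], ?_, ?_⟩
      · simp [dotProduct, Fin.sum_univ_two]
      · rw [hEmat, ha0, hd1, hb, hc0]
        ext i j; fin_cases i <;> fin_cases j <;> simp [outer, vecMulVec]
    · right; right
      refine ⟨![1, 0], ?_, ?_⟩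
      · simp [dotProduct, Fin.sum_univ_two]
      · rw [hEmat, ha1, hd0, hb, hc0]
        ext i j; fin_cases i <;> fin_cases j <;> simp [outer, vecMulVec]
    · right; left
      rw [hEmat, ha1, hd1, hb, hc0]
      ext i j; fin_cases i <;> fin_cases j <;> simp
  · right; right
    have had : a + d = 1 := by
      have h1 : b * (a + d - 1) = 0 := by linear_combination e01
      rcases mul_eq_zero.mp h1 with h | h
      · exact absurd h hb
      · linear_combination h
    have hare : (a.re : ℂ) = a := Complex.conj_eq_iff_re.mp hca
    have hns : (Complex.normSq b : ℂ) = a - a * a := by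
      rw [← Complex.mul_conj, ← hcb]
      linear_combination e00
    have hnsr : Complex.normSq b = a.re - a.re * a.re := by
      have h2 : ((a.re - a.re * a.re : ℝ) : ℂ) = a - a * a := by push_cast; rw [hare]
      exact_mod_cast hns.trans h2.symm
    have hbpos : 0 < Complex.normSq b := Complex.normSq_pos.mpr hb
    have hapos : 0 < a.re := by nlinarith
    have ha0 : a ≠ 0 := by
      intro h
      rw [h] at hapos
      simp at hapos
    set t := Real.sqrt a.re with htdef
    have htpos : (0:ℝ) < t := Real.sqrt_pos.mpr hapos
    have ht0 : (t:ℂ) ≠ 0 := by exact_mod_cast htpos.ne'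
    have ht2 : (t:ℂ) * t = a := by
      rw [← Complex.ofReal_mul, Real.mul_self_sqrt hapos.le, hare]
    have hsc : star c = b := by rw [hcb]; exact Complex.conj_conj b
    have hst : star ((t:ℂ)) = (t:ℂ) := Complex.conj_ofReal t
    have hbc : b * c = a - a * a := by linear_combination e00
    refine ⟨![(t:ℂ), c / t], ?_, ?_⟩
    · simp only [dotProduct, Fin.sum_univ_two, Pi.star_apply, Matrix.cons_val_zero,
        Matrix.cons_val_one, Matrix.head_cons, star_div₀, hsc, hst]
      field_simp
      linear_combination ((t:ℂ)*t + a - 1) * ht2 + e00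
    · rw [hEmat]
      ext i j
      fin_cases i <;> fin_cases j <;>
        simp [outer, vecMulVec_apply, star_div₀, hsc, hst]
      · exact ht2.symm
      · rw [mul_div_cancel₀ b ht0]
      · rw [div_mul_cancel₀ c ht0]
      · field_simp
        linear_combination d * ht2 - e00 + a * had

private lemma kron_conjT (A B : Matrix (Fin 2) (Fin 2) ℂ) :
    (A ⊗ₖ B)ᴴ = Aᴴ ⊗ₖ Bᴴ := by
  ext ⟨i, j⟩ ⟨k, l⟩
  simp [conjTranspose_apply, kron_entry]

private lemma outer_kron_outer (u w : Fin 2 → ℂ) :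
    outer u ⊗ₖ outer w = vecMulVec (fun p : Fin 2 × Fin 2 => u p.1 * w p.2)
      (star fun p : Fin 2 × Fin 2 => u p.1 * w p.2) := by
  ext ⟨i, j⟩ ⟨k, l⟩
  simp only [kron_entry, outer, vecMulVec_apply, Pi.star_apply, star_mul']
  ring

/-- a rank-2 orthogonal projection on `ℂ² ⊗ ℂ²` of product form `A ⊗ B`
is either `|φ⟩⟨φ| ⊗ I` or `I ⊗ |ψ⟩⟨ψ|` for some unit vector. -/
theorem statement15 (P : Matrix (Fin 2 × Fin 2) (Fin 2 × Fin 2) ℂ)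
    (hPadj : Pᴴ = P) (hPP : P * P = P) (hPrank : P.rank = 2)
    (A B : Matrix (Fin 2) (Fin 2) ℂ) (hAB : P = A ⊗ₖ B) :
    (∃ φv : Fin 2 → ℂ, dotProduct (star φv) φv = 1 ∧
      P = outer φv ⊗ₖ (1 : Matrix (Fin 2) (Fin 2) ℂ)) ∨
    (∃ ψ : Fin 2 → ℂ, dotProduct (star ψ) ψ = 1 ∧
      P = (1 : Matrix (Fin 2) (Fin 2) ℂ) ⊗ₖ outer ψ) := by
  have hA0 : A ≠ 0 := by
    intro h
    rw [h, zero_kronecker] at hAB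
    rw [hAB, rank_zero] at hPrank
    exact two_ne_zero hPrank.symm
  have hB0 : B ≠ 0 := by
    intro h
    rw [h, kronecker_zero] at hAB
    rw [hAB, rank_zero] at hPrank
    exact two_ne_zero hPrank.symm
  have hidem : A ⊗ₖ B = (A * A) ⊗ₖ (B * B) := by
    conv_lhs => rw [← hAB, ← hPP, hAB, ← mul_kronecker_mul]
  obtain ⟨μ, hμ, hAA, hBB⟩ := kron_factor A B (A * A) (B * B) hA0 hB0 hidem
  set E : Matrix (Fin 2) (Fin 2) ℂ := μ⁻¹ • A with hEdef
  set F : Matrix (Fin 2) (Fin 2) ℂ := μ • B with hFdef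
  have hEF : E ⊗ₖ F = P := by
    rw [hEdef, hFdef, smul_kronecker, kronecker_smul, smul_smul, inv_mul_cancel₀ hμ, one_smul,
      hAB]
  have hE2 : E * E = E := by
    rw [hEdef, smul_mul_smul_comm, hAA, smul_smul]
    congr 1
    field_simp
  have hBB' : B * B = μ⁻¹ • B := by
    conv_rhs => rw [hBB]
    rw [smul_smul, inv_mul_cancel₀ hμ, one_smul]
  have hF2 : F * F = F := by
    rw [hFdef, smul_mul_smul_comm, hBB', smul_smul]
    congr 1
    field_simp
  have hE0 : E ≠ 0 := smul_ne_zero (inv_ne_zero hμ) hA0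
  have hF0 : F ≠ 0 := smul_ne_zero hμ hB0
  have hEH0 : Eᴴ ≠ 0 := fun h => hE0 (by simpa using congrArg conjTranspose h)
  have hFH0 : Fᴴ ≠ 0 := fun h => hF0 (by simpa using congrArg conjTranspose h)
  have hherm : Eᴴ ⊗ₖ Fᴴ = E ⊗ₖ F := by
    rw [← kron_conjT, hEF, hPadj]
  obtain ⟨ν, hν, hEν, hFν⟩ := kron_factor Eᴴ Fᴴ E F hEH0 hFH0 hherm
  have hν1 : ν = 1 := by
    have h1 : Fᴴ * Fᴴ = Fᴴ := by rw [← conjTranspose_mul]; exact congrArg conjTranspose hF2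
    rw [hFν, smul_mul_smul_comm, hF2] at h1
    have h2 : (ν * ν - ν) • F = 0 := by rw [sub_smul, h1]; simp
    rcases smul_eq_zero.mp h2 with h | h
    · have : ν * (ν - 1) = 0 := by linear_combination h
      rcases mul_eq_zero.mp this with h' | h'
      · exact absurd h' hν
      · exact sub_eq_zero.mp h'
    · exact absurd h hF0
  rw [hν1, one_smul] at hEν hFν
  have hEH : Eᴴ = E := hEν.symm
  have hFH : Fᴴ = F := hFν
  have hPne : ∀ Q : Matrix (Fin 2 × Fin 2) (Fin 2 × Fin 2) ℂ, Q.rank ≠ 2 → P ≠ Q := by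
    intro Q hQ h
    exact hQ (h ▸ hPrank)
  rcases herm_idem_classify E hEH hE2 with hE | hE | ⟨u, hu, hEu⟩
  · exact absurd hE hE0
  · rcases herm_idem_classify F hFH hF2 with hF | hF | ⟨w, hw, hFw⟩
    · exact absurd hF hF0
    · exfalso
      rw [hE, hF, one_kronecker_one] at hEF
      rw [← hEF, rank_one] at hPrank
      simp at hPrank
    · right
      exact ⟨w, hw, by rw [← hEF, hE, hFw]⟩
  · rcases herm_idem_classify F hFH hF2 with hF | hF | ⟨w, hw, hFw⟩
    · exact absurd hF hF0
    · left
      exact ⟨u, hu, by rw [← hEF, hEu, hF]⟩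
    · exfalso
      rw [hEu, hFw, outer_kron_outer] at hEF
      have hle : P.rank ≤ 1 := by
        rw [← hEF, vecMulVec_eq Unit]
        refine le_trans (rank_mul_le_left _ _) (le_trans (rank_le_card_width _) ?_)
        simp
      omega
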